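/- Suppose R is noetherian in codimension 1, with witnessing depiction S, and set T := ⋂_{n ∈ U_{S/R}} S_n ⊆ Frac(R). Then every depiction S' of R is contained in T. -/

import Mathlib

/-! Common framework: depictions of nonnoetherian integral domains (Beil).
`K` plays the role of the fraction field `Frac R`; all rings are `k`-subalgebras of `K`. -/

section Depictions

variable {k K : Type*} [Field k] [Field K] [Algebra k K]

/-- The localization `A_p` of a subalgebra `A ⊆ K` at a prime ideal `p`,
viewed as a subalgebra of `K`. -/
def locAt (A : Subalgebra k K) (p : Ideal A) (hp : p.IsPrime) : Subalgebra k K where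
  carrier := {x : K | ∃ a s : A, s ∉ p ∧ x * (s : K) = (a : K)}
  one_mem' := ⟨1, 1, (Ideal.ne_top_iff_one p).mp hp.ne_top, by simp⟩
  zero_mem' := ⟨0, 1, (Ideal.ne_top_iff_one p).mp hp.ne_top, by simp⟩
  mul_mem' := by
    rintro x y ⟨a, s, hs, hx⟩ ⟨b, t, ht, hy⟩
    refine ⟨a * b, s * t, fun h => ((hp.mem_or_mem h).elim hs ht), ?_⟩
    have : x * y * ((s : K) * (t : K)) = (x * s) * (y * t) := by ring
    push_cast
    rw [this, hx, hy]
  add_mem' := by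
    rintro x y ⟨a, s, hs, hx⟩ ⟨b, t, ht, hy⟩
    refine ⟨a * t + b * s, s * t, fun h => ((hp.mem_or_mem h).elim hs ht), ?_⟩
    have : (x + y) * ((s : K) * (t : K)) = (x * s) * t + (y * t) * s := by ring
    push_cast
    rw [this, hx, hy]
  algebraMap_mem' := fun c =>
    ⟨algebraMap k A c, 1, (Ideal.ne_top_iff_one p).mp hp.ne_top, by simp⟩

lemma mem_locAt {A : Subalgebra k K} {p : Ideal A} {hp : p.IsPrime} {x : K} :
    x ∈ locAt A p hp ↔ ∃ a s : A, s ∉ p ∧ x * (s : K) = (a : K) := Iff.rfl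

/-- `n ∈ U_{S/R}`: `n` is a maximal ideal of `S` with `R_{n ∩ R} = S_n`. -/
def memU (R S : Subalgebra k K) (h : R ≤ S) (n : Ideal S) : Prop :=
  ∃ hn : n.IsMaximal,
    locAt R (n.comap (Subalgebra.inclusion h)) (hn.isPrime.comap _) = locAt S n hn.isPrime

/-- `q ∈ Z_{S/R}`: `q` is a prime of `S` whose zero locus meets `U_{S/R}`,
i.e. some `n ∈ U_{S/R}` contains `q`. -/
def memZ (R S : Subalgebra k K) (h : R ≤ S) (q : Ideal S) : Prop :=
  q.IsPrime ∧ ∃ n : Ideal S, memU R S h n ∧ q ≤ n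

/-- `S` is a depiction of `R`. -/
structure IsDepiction (R S : Subalgebra k K) : Prop where
  le : R ≤ S
  fg : S.FG
  specSurj : ∀ p : Ideal R, p.IsPrime →
    ∃ q : Ideal S, q.IsPrime ∧ q.comap (Subalgebra.inclusion le) = p
  memU_iff : ∀ (n : Ideal S) (hn : n.IsMaximal),
    memU R S le n ↔
      IsNoetherianRing (locAt R (n.comap (Subalgebra.inclusion le)) (hn.isPrime.comap _))
  nonempty : ∃ n : Ideal S, memU R S le n

/-- The height of an ideal `q`, as the Krull dimension of the set of primes contained in `q`. -/
noncomputable def htOf {A : Type*} [CommRing A] (q : Ideal A) : WithBot ℕ∞ :=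
  Order.krullDim {p : PrimeSpectrum A // p.asIdeal ≤ q}

/-- The geometric height of a prime `p` of `R`: the minimum of the heights `ht_S q` over all
depictions `S` of `R` and primes `q` of `S` with `q ∩ R = p`. -/
noncomputable def ght (R : Subalgebra k K) (p : Ideal R) : WithBot ℕ∞ :=
  sInf {h | ∃ (S : Subalgebra k K) (hd : IsDepiction R S) (q : Ideal S),
    q.IsPrime ∧ q.comap (Subalgebra.inclusion hd.le) = p ∧ h = htOf q}

/-- The geometric dimension of a prime `p` of `R`: `gdim p = dim R - ght p`. -/
noncomputable def gdim (R : Subalgebra k K) (p : Ideal R) : WithBot ℕ∞ :=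
  Option.map₂ (· - ·) (ringKrullDim ↥R) (ght R p)

/-- `T := ⋂_{n ∈ U_{S/R}} S_n`, as a subalgebra of `K`. -/
noncomputable def depT (R S : Subalgebra k K) (h : R ≤ S) : Subalgebra k K :=
  sInf {L | ∃ (n : Ideal S) (hn : n.IsMaximal), memU R S h n ∧ L = locAt S n hn.isPrime}

lemma le_depT (R S : Subalgebra k K) (h : R ≤ S) : S ≤ depT R S h := by
  refine le_sInf ?_
  rintro L ⟨n, hn, -, rfl⟩
  intro x hx
  exact ⟨⟨x, hx⟩, 1, (Ideal.ne_top_iff_one n).mp hn.ne_top, by simp⟩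

/-- A depiction `S` of `R` witnesses `noetherian in codimension 1`:
every height 1 prime of `S` lies in `Z_{S/R}`. -/
def Witnessing (R S : Subalgebra k K) (h : R ≤ S) : Prop :=
  ∀ q : Ideal S, q.IsPrime → htOf q = 1 → memZ R S h q

/-- `R` is noetherian in codimension 1. -/
def NoethCodimOne (R : Subalgebra k K) : Prop :=
  ∃ (S : Subalgebra k K) (hd : IsDepiction R S), Witnessing R S hd.le

/-- A depiction `S` of `R` is saturated if `ght (q ∩ R) = ht_S q` for every prime `q` of `S`
minimal over `(q ∩ R)S`. -/
def IsSaturated (R S : Subalgebra k K) (h : R ≤ S) : Prop :=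
  ∀ q : Ideal S,
    q ∈ (Ideal.map (Subalgebra.inclusion h) (q.comap (Subalgebra.inclusion h))).minimalPrimes →
      ght R (q.comap (Subalgebra.inclusion h)) = htOf q

/-- The subalgebra `k + p ⊆ K`, for `p` an ideal of a subalgebra `S ⊆ K`. -/
def kPlus (S : Subalgebra k K) (p : Ideal S) : Subalgebra k K where
  carrier := {x : K | ∃ (c : k) (f : S), f ∈ p ∧ x = algebraMap k K c + (f : K)}
  one_mem' := ⟨1, 0, p.zero_mem, by simp⟩
  zero_mem' := ⟨0, 0, p.zero_mem, by simp⟩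
  mul_mem' := by
    rintro x y ⟨c, f, hf, rfl⟩ ⟨d, g, hg, rfl⟩
    refine ⟨c * d, algebraMap k S c * g + algebraMap k S d * f + f * g,
      add_mem (add_mem (p.mul_mem_left _ hg) (p.mul_mem_left _ hf)) (p.mul_mem_left _ hg),
      ?_⟩
    push_cast
    ring
  add_mem' := by
    rintro x y ⟨c, f, hf, rfl⟩ ⟨d, g, hg, rfl⟩
    exact ⟨c + d, f + g, add_mem hf hg, by push_cast; ring⟩
  algebraMap_mem' := fun c => ⟨c, 0, p.zero_mem, by simp⟩

lemma kPlus_le (S : Subalgebra k K) (p : Ideal S) : kPlus S p ≤ S := by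
  rintro x ⟨c, f, hf, rfl⟩
  exact add_mem (S.algebraMap_mem c) f.2

end Depictions


section ProofHelpers

variable {k K : Type*} [Field k] [Field K] [Algebra k K]

lemma locAt_congr {A : Subalgebra k K} {p q : Ideal A} (h : p = q) (hp : p.IsPrime)
    (hq : q.IsPrime) : locAt A p hp = locAt A q hq := by subst h; rfl

lemma le_locAt (A : Subalgebra k K) (p : Ideal A) (hp : p.IsPrime) : A ≤ locAt A p hp := by
  intro x hx
  exact ⟨⟨x, hx⟩, 1, (Ideal.ne_top_iff_one p).mp hp.ne_top, by simp⟩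

lemma isNoetherianRing_locAt (S : Subalgebra k K) (hfg : S.FG) (n : Ideal S) (hp : n.IsPrime) :
    IsNoetherianRing (locAt S n hp) := by
  letI : Algebra ↥S ↥(locAt S n hp) :=
    ((Subalgebra.inclusion (le_locAt S n hp)).toRingHom).toAlgebra
  have hcoe : ∀ s : ↥S, ((algebraMap ↥S ↥(locAt S n hp) s : ↥(locAt S n hp)) : K) = (s : K) :=
    fun s => rfl
  have hloc : IsLocalization n.primeCompl ↥(locAt S n hp) := by
    constructor
    constructor
    · rintro ⟨s, hs⟩
      have hs0 : (s : K) ≠ 0 := by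
        intro h0
        exact hs (by simpa [show s = 0 from Subtype.ext h0] using n.zero_mem)
      rw [isUnit_iff_exists_inv]
      refine ⟨⟨(s : K)⁻¹, 1, s, hs, by field_simp; simp⟩, ?_⟩
      apply Subtype.ext
      show (s : K) * (s : K)⁻¹ = 1
      field_simp
    · rintro ⟨z, a, s, hs, hz⟩
      refine ⟨(a, ⟨s, hs⟩), Subtype.ext ?_⟩
      exact hz
    · intro a b hab
      have hK : (a : K) = (b : K) := congrArg (fun z : ↥(locAt S n hp) => (z : K)) hab
      have hab' : a = b := Subtype.ext hK
      exact ⟨1, by rw [hab']⟩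
  have hN : IsNoetherianRing ↥S :=
    letI : Algebra.FiniteType k ↥S := (Subalgebra.fg_iff_finiteType S).mp hfg
    Algebra.FiniteType.isNoetherianRing k ↥S
  exact IsLocalization.isNoetherianRing n.primeCompl _ hN

lemma comap_isMaximal_of_fg (R S : Subalgebra k K) (h : R ≤ S) (hfg : S.FG)
    (n : Ideal S) (hn : n.IsMaximal) :
    (n.comap (Subalgebra.inclusion h)).IsMaximal := by
  letI := hn
  letI := Ideal.Quotient.field n
  letI : Algebra.FiniteType k ↥S := (Subalgebra.fg_iff_finiteType S).mp hfg
  letI : Algebra.FiniteType k (↥S ⧸ n) :=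
    Algebra.FiniteType.of_surjective (Ideal.Quotient.mkₐ k n)
      Ideal.Quotient.mk_surjective
  letI : Module.Finite k (↥S ⧸ n) := finite_of_finite_type_of_isJacobsonRing k (↥S ⧸ n)
  letI : Algebra.IsIntegral k (↥S ⧸ n) := Algebra.IsIntegral.of_finite k (↥S ⧸ n)
  set p := n.comap (Subalgebra.inclusion h) with hp
  letI : p.IsPrime := hn.isPrime.comap _
  let φ : (↥R ⧸ p) →ₐ[k] (↥S ⧸ n) := Ideal.quotientMapₐ n (Subalgebra.inclusion h) le_rfl
  have hφinj : Function.Injective φ := Ideal.quotientMap_injective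
  have hint : Algebra.IsIntegral k (↥R ⧸ p) := by
    constructor
    intro x
    obtain ⟨P, hPmonic, hPeval⟩ := Algebra.IsIntegral.isIntegral (R := k) (φ x)
    refine ⟨P, hPmonic, ?_⟩
    apply hφinj
    have : φ (Polynomial.aeval x P) = Polynomial.aeval (φ x) P :=
      (Polynomial.aeval_algHom_apply φ x P).symm
    rw [map_zero]
    rw [show Polynomial.eval₂ (algebraMap k (↥R ⧸ p)) x P = Polynomial.aeval x P from rfl,
      this]
    exact hPeval
  haveI : Nontrivial (↥R ⧸ p) := Ideal.Quotient.nontrivial_iff.mpr ‹p.IsPrime›.ne_top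
  have hfield : IsField (↥R ⧸ p) :=
    (Algebra.IsIntegral.isField_iff_isField
      (R := k) (S := ↥R ⧸ p) (RingHom.injective _)).mp (Field.toIsField k)
  exact Ideal.Quotient.maximal_of_isField p hfield

end ProofHelpers

/-- If `R` is noetherian in codimension 1 with witnessing depiction `S` and
`T := ⋂_{n ∈ U_{S/R}} S_n`, then every depiction `S'` of `R` is contained in `T`. -/
theorem depiction_le_depT (k K : Type*) [Field k] [IsAlgClosed k] [Field K] [Algebra k K]
    (R : Subalgebra k K) (hfrac : IsFractionRing ↥R K)
    (S : Subalgebra k K) (hS : IsDepiction R S) (hw : Witnessing R S hS.le) :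
    ∀ S' : Subalgebra k K, IsDepiction R S' → S' ≤ depT R S hS.le := by
  intro S' hS'
  refine le_sInf ?_
  rintro L ⟨n, hn, hU, rfl⟩
  obtain ⟨hn', heq⟩ := hU
  have hpmax : (n.comap (Subalgebra.inclusion hS.le)).IsMaximal :=
    comap_isMaximal_of_fg R S hS.le hS.fg n hn
  have hnoeth : IsNoetherianRing
      (locAt R (n.comap (Subalgebra.inclusion hS.le)) (hn.isPrime.comap _)) := by
    rw [show locAt R (n.comap (Subalgebra.inclusion hS.le)) (hn.isPrime.comap _)
        = locAt S n hn.isPrime from heq]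
    exact isNoetherianRing_locAt S hS.fg n hn.isPrime
  obtain ⟨q', hq', hq'comap⟩ := hS'.specSurj (n.comap (Subalgebra.inclusion hS.le))
    hpmax.isPrime
  obtain ⟨n', hn'max, hq'n'⟩ := q'.exists_le_maximal hq'.ne_top
  have hcomap : n'.comap (Subalgebra.inclusion hS'.le) = n.comap (Subalgebra.inclusion hS.le) := by
    refine (hpmax.eq_of_le (hn'max.isPrime.comap _).ne_top ?_).symm
    rw [← hq'comap]
    exact Ideal.comap_mono hq'n'
  have hmemU : memU R S' hS'.le n' := by
    rw [hS'.memU_iff n' hn'max]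
    rw [locAt_congr hcomap (hn'max.isPrime.comap _) (hn.isPrime.comap _)]
    exact hnoeth
  obtain ⟨hn'2, heq'⟩ := hmemU
  calc S' ≤ locAt S' n' hn'2.isPrime := le_locAt S' n' hn'2.isPrime
    _ = locAt R (n'.comap (Subalgebra.inclusion hS'.le)) (hn'2.isPrime.comap _) := heq'.symm
    _ = locAt R (n.comap (Subalgebra.inclusion hS.le)) (hn.isPrime.comap _) :=
        locAt_congr hcomap _ _
    _ = locAt S n hn.isPrime := heq
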